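/- For every integer m ≥ 0, the number of saturated monomial ideals of ℂ[x_0,x_1] whose Hilbert polynomial is the constant polynomial m is exactly m + 1. -/

import Mathlib

open MvPolynomial

/-- The Hilbert function of an ideal `I ⊆ ℂ[x_0,…,x_{n-1}]`: the dimension over `ℂ` of the
degree-`d` graded piece of the quotient ring. -/
noncomputable def hilbertFn (n : ℕ) (I : Ideal (MvPolynomial (Fin n) ℂ)) (d : ℕ) : ℕ :=
  Module.finrank ℂ
    ((homogeneousSubmodule (Fin n) ℂ d) ⧸
      (Submodule.comap (homogeneousSubmodule (Fin n) ℂ d).subtype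
        (Submodule.restrictScalars ℂ I)))

/-- A monomial ideal: an ideal generated by monomials. -/
def IsMonomialIdeal {n : ℕ} (I : Ideal (MvPolynomial (Fin n) ℂ)) : Prop :=
  ∃ S : Set (Fin n →₀ ℕ), I = Ideal.span ((fun a => monomial a (1 : ℂ)) '' S)

/-- A homogeneous ideal `I` is saturated if for every homogeneous `f`, whenever `x_i * f ∈ I`
for all variables `x_i`, one has `f ∈ I`. -/
def IsSaturatedIdeal {n : ℕ} (I : Ideal (MvPolynomial (Fin n) ℂ)) : Prop :=
  ∀ f : MvPolynomial (Fin n) ℂ, (∃ d, f.IsHomogeneous d) →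
    (∀ i : Fin n, X i * f ∈ I) → f ∈ I

/-- `I` has Hilbert polynomial `p` if its Hilbert function agrees with `p` for all
sufficiently large degrees. -/
def HasHilbertPoly {n : ℕ} (I : Ideal (MvPolynomial (Fin n) ℂ)) (p : Polynomial ℚ) : Prop :=
  ∃ N : ℕ, ∀ d : ℕ, N ≤ d → (hilbertFn n I d : ℚ) = p.eval (d : ℚ)

/-- `I`'s Hilbert function eventually agrees with the function `p`. -/
def HasHilbertFun {n : ℕ} (I : Ideal (MvPolynomial (Fin n) ℂ)) (p : ℕ → ℕ) : Prop :=
  ∃ N : ℕ, ∀ d : ℕ, N ≤ d → hilbertFn n I d = p d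

/-- The value at `d` of the Hilbert polynomial `p_λ` attached to a partition
`λ = (λ_1, …, λ_r)` (given as a list): `p_λ(d) = Σ_{i=1}^r C(d + λ_i − i, λ_i − 1)`.
(For `d ≥ r` the truncated subtraction agrees with the true polynomial value.) -/
def partitionPoly (L : List ℕ) (d : ℕ) : ℕ :=
  ∑ i : Fin L.length, Nat.choose (d + L.get i - (i.val + 1)) (L.get i - 1)

/-- A `k`-orthant in `ℤ_{≥0}^m`: the set of lattice points with `m − k` coordinates fixed. -/
def IsOrthant (m k : ℕ) (K : Set (Fin m →₀ ℕ)) : Prop :=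
  ∃ (S : Finset (Fin m)) (c : Fin m → ℕ), S.card = m - k ∧
    K = {a : Fin m →₀ ℕ | ∀ i ∈ S, a i = c i}

attribute [local instance] MvPolynomial.gradedAlgebra

/-- A homogeneous ideal. -/
def IsHomogeneousIdeal {n : ℕ} (I : Ideal (MvPolynomial (Fin n) ℂ)) : Prop :=
  Ideal.IsHomogeneous (homogeneousSubmodule (Fin n) ℂ) I

namespace Statement3Aux

noncomputable def expd (n d : ℕ) : Finset (Fin n →₀ ℕ) := Finset.finsuppAntidiag Finset.univ d

lemma mem_expd {n d : ℕ} {e : Fin n →₀ ℕ} : e ∈ expd n d ↔ e.degree = d := by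
  simp only [expd, Finset.mem_finsuppAntidiag, Finsupp.degree_apply, Finset.subset_univ, and_true]
  rw [show ∑ x : Fin n, e x = ∑ i ∈ e.support, e i from
    (Finset.sum_subset (Finset.subset_univ _)
      (by simp +contextual [Finsupp.notMem_support_iff])).symm]

lemma degree_eq_of_mem_support {n d : ℕ} {f : MvPolynomial (Fin n) ℂ} (hf : f.IsHomogeneous d)
    {e : Fin n →₀ ℕ} (he : e ∈ f.support) : e.degree = d := by
  by_contra h
  exact (MvPolynomial.mem_support_iff.1 he) (hf.coeff_eq_zero h)

noncomputable def badSet {n : ℕ} (S : Set (Fin n →₀ ℕ)) (d : ℕ) : Finset (Fin n →₀ ℕ) :=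
  @Finset.filter _ (fun e => ¬ ∃ s ∈ S, s ≤ e) (Classical.decPred _) (expd n d)

lemma mem_badSet {n : ℕ} {S : Set (Fin n →₀ ℕ)} {d : ℕ} {e : Fin n →₀ ℕ} :
    e ∈ badSet S d ↔ e.degree = d ∧ ¬ ∃ s ∈ S, s ≤ e := by
  rw [badSet, @Finset.mem_filter _ _ (Classical.decPred _), mem_expd]

lemma hilbertFn_span_monomials {n : ℕ} (S : Set (Fin n →₀ ℕ)) (d : ℕ) :
    hilbertFn n (Ideal.span ((fun a => monomial a (1 : ℂ)) '' S)) d = (badSet S d).card := by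
  classical
  set I := Ideal.span ((fun a => monomial a (1 : ℂ)) '' S) with hI
  set F := badSet S d with hF
  let φ : (homogeneousSubmodule (Fin n) ℂ d) →ₗ[ℂ] (F → ℂ) :=
    { toFun := fun f e => coeff e.1 f.1
      map_add' := fun f g => by funext e; simp [coeff_add]
      map_smul' := fun c f => by funext e; simp [coeff_smul] }
  have hker : LinearMap.ker φ = Submodule.comap (homogeneousSubmodule (Fin n) ℂ d).subtype
      (Submodule.restrictScalars ℂ I) := by
    ext f
    simp only [LinearMap.mem_ker, Submodule.mem_comap, Submodule.subtype_apply,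
      Submodule.restrictScalars_mem, hI, mem_ideal_span_monomial_image]
    constructor
    · intro h0 e he
      by_contra hno
      have heF : e ∈ F := mem_badSet.2 ⟨degree_eq_of_mem_support f.2 he, hno⟩
      have := congrFun h0 ⟨e, heF⟩
      exact (MvPolynomial.mem_support_iff.1 he) this
    · intro h
      funext e
      by_contra hc
      have hs : e.1 ∈ (f : MvPolynomial (Fin n) ℂ).support := MvPolynomial.mem_support_iff.2 hc
      have := (mem_badSet.1 e.2).2
      exact this (h e.1 hs)
  have hsurj : Function.Surjective φ := by
    intro g
    refine ⟨⟨∑ e ∈ F.attach, g e • monomial e.1 1, ?_⟩, ?_⟩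
    · refine Submodule.sum_mem _ fun e _ => Submodule.smul_mem _ _ ?_
      exact isHomogeneous_monomial 1 (mem_badSet.1 e.2).1
    · funext e
      show coeff e.1 (∑ e' ∈ F.attach, g e' • monomial e'.1 (1:ℂ)) = g e
      rw [MvPolynomial.coeff_sum]
      rw [Finset.sum_eq_single e]
      · simp [coeff_monomial]
      · intro e' _ hne
        simp only [coeff_smul, coeff_monomial]
        rw [if_neg (fun h => hne (Subtype.ext h)), smul_zero]
      · intro h; exact absurd (Finset.mem_attach _ _) h
  have : hilbertFn n I d = Module.finrank ℂ (F → ℂ) := by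
    rw [hilbertFn, ← hker]
    exact LinearEquiv.finrank_eq (LinearMap.quotKerEquivOfSurjective φ hsurj)
  rw [this, Module.finrank_pi, Fintype.card_coe]

noncomputable def ee (p q : ℕ) : Fin 2 →₀ ℕ := Finsupp.single 0 p + Finsupp.single 1 q

@[simp] lemma ee_apply0 (p q : ℕ) : ee p q 0 = p := by simp [ee, Finsupp.single_apply]
@[simp] lemma ee_apply1 (p q : ℕ) : ee p q 1 = q := by simp [ee, Finsupp.single_apply]

lemma ee_eq_self (e : Fin 2 →₀ ℕ) : ee (e 0) (e 1) = e := by ext i; fin_cases i <;> simp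

lemma degree_fin2 (e : Fin 2 →₀ ℕ) : e.degree = e 0 + e 1 := by
  rw [Finsupp.degree_apply, show ∑ i ∈ e.support, e i = ∑ x : Fin 2, e x from
    Finset.sum_subset (Finset.subset_univ _)
      (by simp +contextual [Finsupp.notMem_support_iff]), Fin.sum_univ_two]

lemma le_iff_fin2 {e₁ e₂ : Fin 2 →₀ ℕ} : e₁ ≤ e₂ ↔ e₁ 0 ≤ e₂ 0 ∧ e₁ 1 ≤ e₂ 1 := by
  rw [Finsupp.le_def]
  exact ⟨fun h => ⟨h 0, h 1⟩, by rintro ⟨h0, h1⟩ i; fin_cases i <;> assumption⟩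

lemma ee_le_iff {a b p q : ℕ} : ee a b ≤ ee p q ↔ a ≤ p ∧ b ≤ q := by rw [le_iff_fin2]; simp

lemma card_badSet_pair {a b d : ℕ} (h : a + b ≤ d) : (badSet {ee a b} d).card = a + b := by
  classical
  have himg : badSet {ee a b} d
      = ((Finset.range (d+1)).filter (fun p => p < a ∨ d - b < p)).image
          (fun p => ee p (d - p)) := by
    ext e
    simp only [mem_badSet, Finset.mem_image, Finset.mem_filter, Finset.mem_range,
      Set.mem_singleton_iff, exists_eq_left]
    constructor
    · rintro ⟨hdeg, hno⟩
      refine ⟨e 0, ⟨?_, ?_⟩, ?_⟩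
      · have := degree_fin2 e; omega
      · rw [← ee_eq_self e, ee_le_iff] at hno
        have := degree_fin2 e
        omega
      · rw [show d - e 0 = e 1 by have := degree_fin2 e; omega]
        exact ee_eq_self e
    · rintro ⟨p, ⟨hp, hcond⟩, rfl⟩
      refine ⟨by rw [degree_fin2]; simp; omega, ?_⟩
      rw [ee_le_iff]
      omega
  rw [himg, Finset.card_image_of_injOn ?inj]
  case inj =>
    intro p _ q _ hpq
    have := congrArg (fun e => e 0) hpq
    simpa using this
  have : (Finset.range (d+1)).filter (fun p => p < a ∨ d - b < p)
      = Finset.range a ∪ Finset.Ico (d - b + 1) (d + 1) := by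
    ext p
    simp only [Finset.mem_filter, Finset.mem_range, Finset.mem_union, Finset.mem_Ico]
    omega
  rw [this, Finset.card_union_of_disjoint, Finset.card_range, Nat.card_Ico]
  · omega
  · rw [Finset.disjoint_left]
    intro p hp hp'
    simp only [Finset.mem_range] at hp
    simp only [Finset.mem_Ico] at hp'
    omega

lemma card_expd_two (d : ℕ) : (expd 2 d).card = d + 1 := by
  classical
  have himg : expd 2 d = (Finset.range (d+1)).image (fun p => ee p (d - p)) := by
    ext e
    simp only [mem_expd, Finset.mem_image, Finset.mem_range]
    constructor
    · intro hdeg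
      refine ⟨e 0, by rw [degree_fin2] at hdeg; omega, ?_⟩
      rw [show d - e 0 = e 1 by rw [degree_fin2] at hdeg; omega]
      exact ee_eq_self e
    · rintro ⟨p, hp, rfl⟩
      rw [degree_fin2]; simp; omega
  rw [himg, Finset.card_image_of_injOn, Finset.card_range]
  intro p _ q _ hpq
  have := congrArg (fun e => e 0) hpq
  simpa using this

/-- The candidate ideals. -/
noncomputable def Ia (a b : ℕ) : Ideal (MvPolynomial (Fin 2) ℂ) :=
  Ideal.span ((fun e => monomial e (1 : ℂ)) '' {ee a b})

lemma mem_Ia {a b : ℕ} {f : MvPolynomial (Fin 2) ℂ} :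
    f ∈ Ia a b ↔ ∀ e ∈ f.support, ee a b ≤ e := by
  rw [Ia, mem_ideal_span_monomial_image]
  simp

lemma monomial_mem_Ia {a b : ℕ} {e : Fin 2 →₀ ℕ} :
    monomial e (1 : ℂ) ∈ Ia a b ↔ ee a b ≤ e := by
  rw [mem_Ia, support_monomial, if_neg one_ne_zero]
  simp

lemma Ia_monomial (a b : ℕ) : IsMonomialIdeal (Ia a b) := ⟨{ee a b}, rfl⟩

lemma Ia_saturated (a b : ℕ) : IsSaturatedIdeal (Ia a b) := by
  intro f _ hX
  rw [mem_Ia]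
  intro e he
  have key : ∀ i : Fin 2, ee a b ≤ Finsupp.single i 1 + e := by
    intro i
    refine mem_Ia.1 (hX i) _ ?_
    rw [MvPolynomial.mem_support_iff, coeff_X_mul]
    exact MvPolynomial.mem_support_iff.1 he
  have h0 := le_iff_fin2.1 (key 0)
  have h1 := le_iff_fin2.1 (key 1)
  simp only [Finsupp.add_apply, Finsupp.single_apply, ee_apply0, ee_apply1] at h0 h1
  rw [le_iff_fin2]
  simp only [ee_apply0, ee_apply1]
  norm_num at h0 h1
  omega

lemma Ia_hilbert {m a : ℕ} (ha : a ≤ m) : HasHilbertPoly (Ia a (m - a)) (Polynomial.C (m : ℚ)) := by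
  refine ⟨m, fun d hd => ?_⟩
  rw [Polynomial.eval_C, Ia, hilbertFn_span_monomials, card_badSet_pair (by omega)]
  norm_cast
  omega

lemma classify {m : ℕ} {I : Ideal (MvPolynomial (Fin 2) ℂ)} (hmon : IsMonomialIdeal I)
    (hsat : IsSaturatedIdeal I) (hhp : HasHilbertPoly I (Polynomial.C (m : ℚ))) :
    ∃ a ≤ m, I = Ia a (m - a) := by
  classical
  obtain ⟨S, rfl⟩ := hmon
  set I := Ideal.span ((fun a => monomial a (1 : ℂ)) '' S) with hI
  obtain ⟨N, hN⟩ := hhp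
  -- the Hilbert function counts bad monomials
  have hcount : ∀ d, N ≤ d → (badSet S d).card = m := by
    intro d hd
    have := hN d hd
    rw [Polynomial.eval_C, hilbertFn_span_monomials] at this
    exact_mod_cast this
  set InT : (Fin 2 →₀ ℕ) → Prop := fun e => ∃ s ∈ S, s ≤ e with hInT
  have memI : ∀ f : MvPolynomial (Fin 2) ℂ, f ∈ I ↔ ∀ e ∈ f.support, InT e := by
    intro f; rw [hI, mem_ideal_span_monomial_image]
  have memI' : ∀ e, monomial e (1:ℂ) ∈ I ↔ InT e := by
    intro e
    rw [memI, support_monomial, if_neg one_ne_zero]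
    simp
  have hup : ∀ {e e'}, InT e → e ≤ e' → InT e' := by
    rintro e e' ⟨s, hs, hse⟩ hee
    exact ⟨s, hs, hse.trans hee⟩
  -- some exponent is in T
  have hTne : ∃ e, InT e := by
    set d := max N m with hd
    have hcard := hcount d (le_max_left _ _)
    have hsub : badSet S d ⊆ expd 2 d := fun e he => mem_expd.2 (mem_badSet.1 he).1
    have hlt : (badSet S d).card < (expd 2 d).card := by
      rw [hcard, card_expd_two]; omega
    have hnsub : ¬ expd 2 d ⊆ badSet S d := fun h => absurd (Finset.card_le_card h) (by omega)
    obtain ⟨e, he, hnb⟩ := Finset.not_subset.1 hnsub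
    refine ⟨e, ?_⟩
    by_contra hno
    exact hnb (mem_badSet.2 ⟨mem_expd.1 he, by simpa [hInT] using hno⟩)
  -- definitions of a and b
  set A : Set ℕ := {p | ∃ q, InT (ee p q)} with hA
  set B : Set ℕ := {q | ∃ p, InT (ee p q)} with hB
  have hAne : A.Nonempty := by
    obtain ⟨e, he⟩ := hTne
    exact ⟨e 0, e 1, by rwa [ee_eq_self]⟩
  have hBne : B.Nonempty := by
    obtain ⟨e, he⟩ := hTne
    exact ⟨e 1, e 0, by rwa [ee_eq_self]⟩
  set a := sInf A with ha
  set b := sInf B with hb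
  obtain ⟨q0, hq0⟩ : ∃ q, InT (ee a q) := Nat.sInf_mem hAne
  obtain ⟨p0, hp0⟩ : ∃ p, InT (ee p b) := Nat.sInf_mem hBne
  have hlba : ∀ {p q}, InT (ee p q) → a ≤ p := fun {p q} h => Nat.sInf_le ⟨q, h⟩
  have hlbb : ∀ {p q}, InT (ee p q) → b ≤ q := fun {p q} h => Nat.sInf_le ⟨p, h⟩
  have hbq0 : b ≤ q0 := hlbb hq0
  have hap0 : a ≤ p0 := hlba hp0
  -- saturation in combinatorial form
  have hsatT : ∀ p q, InT (ee (p+1) q) → InT (ee p (q+1)) → InT (ee p q) := by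
    intro p q h1 h2
    rw [← memI'] at h1 h2 ⊢
    refine hsat _ ⟨p + q, isHomogeneous_monomial 1 (by rw [degree_fin2]; simp)⟩ ?_
    intro i
    have hXmul : ∀ (j : Fin 2) (e : Fin 2 →₀ ℕ),
        X j * monomial e (1:ℂ) = monomial (Finsupp.single j 1 + e) 1 := by
      intro j e
      rw [X, monomial_mul, one_mul]
    fin_cases i
    · show X (0 : Fin 2) * (monomial (ee p q)) (1:ℂ) ∈ I
      rw [hXmul, show Finsupp.single (0 : Fin 2) 1 + ee p q = ee (p+1) q by
        ext i; fin_cases i <;> simp [Finsupp.single_apply, Nat.add_comm]]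
      exact h1
    · show X (1 : Fin 2) * (monomial (ee p q)) (1:ℂ) ∈ I
      rw [hXmul, show Finsupp.single (1 : Fin 2) 1 + ee p q = ee p (q+1) by
        ext i; fin_cases i <;> simp [Finsupp.single_apply, Nat.add_comm]]
      exact h2
  -- the ideal is the full orthant
  have hrow : ∀ q, b ≤ q → (∀ p, a ≤ p → InT (ee p (q+1))) → ∀ p, a ≤ p → InT (ee p q) := by
    intro q hq hnext
    have key : ∀ j, a ≤ p0 - j → InT (ee (p0 - j) q) := by
      intro j
      induction j with
      | zero =>
        intro _
        exact hup hp0 (ee_le_iff.2 ⟨le_refl _, hq⟩)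
      | succ j ih =>
        intro hj
        by_cases hcase : p0 - (j+1) = p0 - j
        · rw [hcase]; exact ih (hcase ▸ hj)
        · have hstep : p0 - (j+1) + 1 = p0 - j := by omega
          refine hsatT _ _ ?_ (hnext _ hj)
          rw [hstep]
          exact ih (by omega)
    intro p hp
    rcases le_or_gt p0 p with h | h
    · exact hup hp0 (ee_le_iff.2 ⟨h, hq⟩)
    · have := key (p0 - p) (by omega)
      rwa [show p0 - (p0 - p) = p by omega] at this
  have hall : ∀ k, b ≤ q0 - k → ∀ p, a ≤ p → InT (ee p (q0 - k)) := by
    intro k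
    induction k with
    | zero =>
      intro _ p hp
      exact hup hq0 (ee_le_iff.2 ⟨hp, by omega⟩)
    | succ k ih =>
      intro hbk p hp
      by_cases hcase : q0 - (k+1) = q0 - k
      · rw [hcase]; exact ih (hcase ▸ hbk) p hp
      · have hstep : q0 - (k+1) + 1 = q0 - k := by omega
        refine hrow _ hbk ?_ p hp
        intro p' hp'
        rw [hstep]
        exact ih (by omega) p' hp'
  have hfull : ∀ p q, a ≤ p → b ≤ q → InT (ee p q) := by
    intro p q hp hq
    rcases le_or_gt q0 q with h | h
    · exact hup hq0 (ee_le_iff.2 ⟨hp, h⟩)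
    · have := hall (q0 - q) (by omega) p hp
      rwa [show q0 - (q0 - q) = q by omega] at this
  have hiff : ∀ e, InT e ↔ ee a b ≤ e := by
    intro e
    constructor
    · intro h
      rw [← ee_eq_self e] at h
      rw [le_iff_fin2]
      simp only [ee_apply0, ee_apply1]
      exact ⟨hlba h, hlbb h⟩
    · intro h
      rw [le_iff_fin2] at h
      simp only [ee_apply0, ee_apply1] at h
      rw [← ee_eq_self e]
      exact hfull _ _ h.1 h.2
  -- compute m
  have hm : m = a + b := by
    set d := max N (a + b) with hd
    have h1 := hcount d (le_max_left _ _)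
    have h2 : badSet S d = badSet {ee a b} d := by
      ext e
      rw [mem_badSet, mem_badSet]
      constructor
      · rintro ⟨hdeg, hno⟩
        refine ⟨hdeg, ?_⟩
        simp only [Set.mem_singleton_iff, exists_eq_left]
        intro hle
        exact hno ((hiff e).2 hle)
      · rintro ⟨hdeg, hno⟩
        refine ⟨hdeg, fun hT => ?_⟩
        simp only [Set.mem_singleton_iff, exists_eq_left] at hno
        exact hno ((hiff e).1 hT)
    rw [h2, card_badSet_pair (le_max_right _ _)] at h1
    omega
  refine ⟨a, by omega, ?_⟩
  ext f
  rw [memI f, mem_Ia]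
  have hba : m - a = b := by omega
  rw [hba]
  constructor
  · intro h e he; exact (hiff e).1 (h e he)
  · intro h e he; exact (hiff e).2 (h e he)

end Statement3Aux

open Statement3Aux in
/-- The number of saturated monomial ideals of `ℂ[x_0,x_1]` with Hilbert
polynomial the constant polynomial `m` is exactly `m + 1`. -/
theorem statement3 (m : ℕ) :
    {I : Ideal (MvPolynomial (Fin 2) ℂ) |
        IsMonomialIdeal I ∧ IsSaturatedIdeal I ∧ HasHilbertPoly I (Polynomial.C (m : ℚ))}.ncard
      = m + 1 := by
  have hset : {I : Ideal (MvPolynomial (Fin 2) ℂ) |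
        IsMonomialIdeal I ∧ IsSaturatedIdeal I ∧ HasHilbertPoly I (Polynomial.C (m : ℚ))}
      = (fun a => Ia a (m - a)) '' (Set.Iic m) := by
    ext I
    simp only [Set.mem_setOf_eq, Set.mem_image, Set.mem_Iic]
    constructor
    · rintro ⟨hmon, hsat, hhp⟩
      obtain ⟨a, ha, rfl⟩ := classify hmon hsat hhp
      exact ⟨a, ha, rfl⟩
    · rintro ⟨a, ha, rfl⟩
      exact ⟨Ia_monomial _ _, Ia_saturated _ _, Ia_hilbert ha⟩
  rw [hset, Set.ncard_image_of_injOn, ← Finset.coe_Iic, Set.ncard_coe_finset, Nat.card_Iic]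
  intro a ha a' ha' hEq
  simp only [Set.mem_Iic] at ha ha'
  replace hEq : Ia a (m - a) = Ia a' (m - a') := hEq
  have h1 : monomial (ee a (m - a)) (1:ℂ) ∈ Ia a' (m - a') := by
    rw [← hEq]
    exact monomial_mem_Ia.2 (le_refl _)
  have h2 : monomial (ee a' (m - a')) (1:ℂ) ∈ Ia a (m - a) := by
    rw [hEq]
    exact monomial_mem_Ia.2 (le_refl _)
  rw [monomial_mem_Ia, ee_le_iff] at h1 h2
  omega
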